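/- Competitiveness is preserved by the reduction from double auctions to one-sided auctions: let k be the number of asks and c ≥ 1. Suppose a one-sided auction selects a set Sel of at most k elements of the combined collection of asks and bids whose total value is at least 1/c times the sum of the k largest values in that combined collection. If the selected bids are processed one at a time in a fixed order, matching each selected bid b to the lowest-value currently unmatched ask a whenever a ≤ b and leaving b unmatched otherwise, then the resulting social welfare is at least W(Opt)/c, where W(Opt) is the maximum social welfare over all feasible allocations of the double auction. -/

import Mathlib

/-- Extract the minimum-value unmatched ask from a list, with a fixed
tie-breaking rule (earlier list positions are preferred). Returns the
minimum together with the remaining list. -/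
noncomputable def extractMin : List ℝ → Option (ℝ × List ℝ)
  | [] => none
  | a :: as =>
    match extractMin as with
    | none => some (a, [])
    | some (m, rest) => if a ≤ m then some (a, as) else some (m, a :: rest)

/-- State of the Best-first (greedy) allocation: the currently unmatched asks,
the matched (ask, bid) pairs in match order, and the unmatched bids. -/
structure BfState where
  unmatchedAsks : List ℝ
  matched : List (ℝ × ℝ)
  unmatchedBids : List ℝ

/-- One step of the Best-first allocation: when bid `b` arrives, match it to the
minimum unmatched ask `a` if `a ≤ b`; otherwise leave `b` unmatched. -/
noncomputable def bfStep (s : BfState) (b : ℝ) : BfState :=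
  match extractMin s.unmatchedAsks with
  | some (a, rest) =>
      if a ≤ b then ⟨rest, s.matched ++ [(a, b)], s.unmatchedBids⟩
      else ⟨s.unmatchedAsks, s.matched, s.unmatchedBids ++ [b]⟩
  | none => ⟨s.unmatchedAsks, s.matched, s.unmatchedBids ++ [b]⟩

/-- Run the Best-first allocation on the bids in arrival order. -/
noncomputable def bfRun (asks bids : List ℝ) : BfState :=
  bids.foldl bfStep ⟨asks, [], []⟩

/-- Insertion into an ascending-sorted list. -/
noncomputable def insertAsc (x : ℝ) : List ℝ → List ℝ
  | [] => [x]
  | y :: ys => if x ≤ y then x :: y :: ys else y :: insertAsc x ys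

/-- Sort a list of reals in ascending order. -/
noncomputable def sortAsc (l : List ℝ) : List ℝ := l.foldr insertAsc []

/-- Sort a list of reals in descending order. -/
noncomputable def sortDesc (l : List ℝ) : List ℝ := (sortAsc l).reverse

/-- Match the i-th element of the first list with the i-th element of the
second, stopping as soon as a pair is not matchable (`a ≤ b` fails). -/
noncomputable def matchPrefix : List ℝ → List ℝ → List (ℝ × ℝ)
  | a :: as, b :: bs => if a ≤ b then (a, b) :: matchPrefix as bs else []
  | _, _ => []

/-- The optimal allocation: match the highest bid with the lowest ask, the
second highest bid with the second lowest ask, and so on, stopping as soon as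
a pair is not matchable. -/
noncomputable def optPairs (asks bids : List ℝ) : List (ℝ × ℝ) :=
  matchPrefix (sortAsc asks) (sortDesc bids)

/-- A feasible allocation: a partial matching (multiset of (ask, bid) pairs)
using each ask and each bid at most once, with `a ≤ b` for every matched pair. -/
def IsFeasible (asks bids : List ℝ) (M : Multiset (ℝ × ℝ)) : Prop :=
  M.map Prod.fst ≤ (asks : Multiset ℝ) ∧
  M.map Prod.snd ≤ (bids : Multiset ℝ) ∧
  ∀ p ∈ M, p.1 ≤ p.2

/-- Social welfare of an allocation: sum of matched bid values plus the sum of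
the values of the unmatched asks. -/
noncomputable def welfare (asks : List ℝ) (M : Multiset (ℝ × ℝ)) : ℝ :=
  (M.map Prod.snd).sum + ((asks : Multiset ℝ) - M.map Prod.fst).sum

/-- Social welfare of the Best-first allocation. -/
noncomputable def bfWelfare (asks bids : List ℝ) : ℝ :=
  ((bfRun asks bids).matched.map Prod.snd).sum + (bfRun asks bids).unmatchedAsks.sum

/-- Maximum social welfare over all feasible allocations. -/
noncomputable def OptW (asks bids : List ℝ) : ℝ :=
  sSup {w : ℝ | ∃ M : Multiset (ℝ × ℝ), IsFeasible asks bids M ∧ w = welfare asks M}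

/-! ### Auxiliary lemmas -/


lemma insertAsc_eq (x : ℝ) (l : List ℝ) :
    insertAsc x l = List.orderedInsert (· ≤ ·) x l := by
  induction l with
  | nil => rfl
  | cons y ys ih => simp only [insertAsc, List.orderedInsert, ih]

lemma sortAsc_eq (l : List ℝ) : sortAsc l = List.insertionSort (· ≤ ·) l := by
  induction l with
  | nil => rfl
  | cons y ys ih =>
    simp only [sortAsc, List.foldr, List.insertionSort, insertAsc_eq]
    exact congrArg (List.orderedInsert (· ≤ ·) y) ih

lemma sortAsc_perm (l : List ℝ) : (sortAsc l).Perm l := by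
  rw [sortAsc_eq]; exact List.perm_insertionSort _ l

lemma sortDesc_perm (l : List ℝ) : (sortDesc l).Perm l :=
  (List.reverse_perm _).trans (sortAsc_perm l)

lemma sortDesc_pairwise (l : List ℝ) :
    (sortDesc l).Pairwise (fun a b => b ≤ a) := by
  rw [sortDesc, List.pairwise_reverse]
  have := List.pairwise_insertionSort (· ≤ ·) l
  rw [sortAsc_eq]
  exact this

/-- shifted take sum bound -/
lemma take_succ_sum_le (x : ℝ) (hx : 0 ≤ x) :
    ∀ (l : List ℝ) (s : ℕ), (∀ y ∈ l, y ≤ x) →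
      (l.take (s + 1)).sum ≤ x + (l.take s).sum := by
  intro l
  induction l with
  | nil => intro s _; simpa using hx
  | cons y t ih =>
    intro s hle
    cases s with
    | zero =>
      simp only [List.take, List.sum_cons, List.sum_nil, List.take_zero, add_zero]
      simpa using hle y (by simp)
    | succ s' =>
      simp only [List.take, List.sum_cons]
      have := ih s' (fun z hz => hle z (by simp [hz]))
      linarith

lemma sum_le_take_sum : ∀ (D : List ℝ), D.Pairwise (fun a b => b ≤ a) →
    (∀ y ∈ D, 0 ≤ y) → ∀ S : Multiset ℝ, S ≤ (D : Multiset ℝ) →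
    S.sum ≤ (D.take (Multiset.card S)).sum := by
  intro D
  induction D with
  | nil =>
    intro _ _ S hS
    have : S = 0 := le_antisymm (by simpa using hS) (Multiset.zero_le S)
    simp [this]
  | cons x D' ih =>
    intro hpw h0 S hS
    rcases eq_or_ne S 0 with rfl | hne
    · simp
    have hpw' : D'.Pairwise (fun a b => b ≤ a) := (List.pairwise_cons.mp hpw).2
    have hxge : ∀ y ∈ D', y ≤ x := (List.pairwise_cons.mp hpw).1
    have h0' : ∀ y ∈ D', 0 ≤ y := fun y hy => h0 y (by simp [hy])
    have hScons : S ≤ x ::ₘ (D' : Multiset ℝ) := by simpa using hS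
    by_cases hxS : x ∈ S
    · have hSe : S.erase x ≤ (D' : Multiset ℝ) := by
        have := Multiset.erase_le_erase x hScons
        simpa using this
      have hsum := ih hpw' h0' (S.erase x) hSe
      have hcons : x ::ₘ S.erase x = S := Multiset.cons_erase hxS
      have hcard : Multiset.card S = Multiset.card (S.erase x) + 1 := by
        rw [← hcons]; simp
      rw [hcard]
      simp only [List.take, List.sum_cons]
      have : S.sum = x + (S.erase x).sum := by rw [← hcons]; simp
      linarith
    · have hSD' : S ≤ (D' : Multiset ℝ) := by
        rw [Multiset.le_iff_count]
        intro v
        by_cases hvx : v = x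
        · subst hvx; simp [Multiset.count_eq_zero_of_notMem hxS]
        · have := Multiset.le_iff_count.mp hScons v
          simpa [Multiset.count_cons, List.count_cons, hvx, Ne.symm hvx] using this
      obtain ⟨s', hs'⟩ : ∃ s', Multiset.card S = s' + 1 := by
        have : 0 < Multiset.card S := Multiset.card_pos.mpr hne
        exact ⟨Multiset.card S - 1, by omega⟩
      have h1 := ih hpw' h0' S hSD'
      have h2 := take_succ_sum_le x (h0 x (by simp)) D' s' hxge
      rw [hs'] at h1 ⊢
      simp only [List.take, List.sum_cons]
      linarith

lemma cons_le_of_mem_sub {r t : Multiset ℝ} (h : t ≤ r) {x : ℝ} (hx : x ∈ r - t) :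
    x ::ₘ t ≤ r := by
  rw [Multiset.le_iff_count]
  intro v
  have hcx : Multiset.count x t < Multiset.count x r := by
    have := Multiset.count_pos.mpr hx
    rw [Multiset.count_sub] at this
    omega
  by_cases hvx : v = x
  · subst hvx; simp [Multiset.count_cons]; omega
  · have := Multiset.le_iff_count.mp h v
    simpa [Multiset.count_cons, hvx] using this

lemma extractMin_eq_none {l : List ℝ} (h : extractMin l = none) : l = [] := by
  cases l with
  | nil => rfl
  | cons a as =>
    exfalso; revert h
    simp only [extractMin]
    rcases hm : extractMin as with _ | ⟨m, rest⟩ <;> simp [hm]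
    split <;> simp

lemma extractMin_perm : ∀ {l : List ℝ} {a : ℝ} {rest : List ℝ},
    extractMin l = some (a, rest) → l.Perm (a :: rest) := by
  intro l
  induction l with
  | nil => intro a rest h; simp [extractMin] at h
  | cons x xs ih =>
    intro a rest h
    rcases hm : extractMin xs with _ | ⟨m, r⟩
    · have : xs = [] := extractMin_eq_none hm
      subst this
      simp [extractMin] at h
      obtain ⟨rfl, rfl⟩ := h
      exact List.Perm.refl _
    · rw [extractMin, hm] at h
      by_cases hxm : x ≤ m
      · simp [hxm] at h
        obtain ⟨rfl, rfl⟩ := h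
        exact List.Perm.refl _
      · simp [hxm] at h
        obtain ⟨rfl, rfl⟩ := h
        exact ((ih hm).cons x).trans (List.Perm.swap _ x r)

lemma extractMin_min : ∀ {l : List ℝ} {a : ℝ} {rest : List ℝ},
    extractMin l = some (a, rest) → ∀ x ∈ l, a ≤ x := by
  intro l
  induction l with
  | nil => intro a rest h; simp [extractMin] at h
  | cons y xs ih =>
    intro a rest h
    rcases hm : extractMin xs with _ | ⟨m, r⟩
    · have : xs = [] := extractMin_eq_none hm
      subst this
      simp [extractMin] at h
      obtain ⟨rfl, rfl⟩ := h
      intro x hx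
      simp at hx; subst hx; rfl
    · rw [extractMin, hm] at h
      by_cases hym : y ≤ m
      · simp [hym] at h
        obtain ⟨rfl, rfl⟩ := h
        intro x hx
        rcases List.mem_cons.mp hx with rfl | hx
        · rfl
        · exact le_trans hym (ih hm x hx)
      · simp [hym] at h
        obtain ⟨rfl, rfl⟩ := h
        intro x hx
        rcases List.mem_cons.mp hx with rfl | hx
        · exact le_of_not_ge hym
        · exact ih hm x hx

theorem test : True := trivial

lemma foldl_bfStep_general : ∀ (bids : List ℝ) (A : List ℝ) (M : List (ℝ × ℝ)) (U : List ℝ),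
    List.foldl bfStep ⟨A, M, U⟩ bids =
      ⟨(List.foldl bfStep ⟨A, [], []⟩ bids).unmatchedAsks,
       M ++ (List.foldl bfStep ⟨A, [], []⟩ bids).matched,
       U ++ (List.foldl bfStep ⟨A, [], []⟩ bids).unmatchedBids⟩ := by
  intro bids
  induction bids with
  | nil => intro A M U; simp
  | cons b bs ih =>
    intro A M U
    simp only [List.foldl]
    rcases hm : extractMin A with _ | ⟨a, rest⟩
    · simp only [bfStep, hm]
      rw [ih A M (U ++ [b]), ih A [] ([] ++ [b])]
      simp
    · by_cases hab : a ≤ b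
      · simp only [bfStep, hm, if_pos hab]
        rw [ih rest (M ++ [(a, b)]) U, ih rest ([] ++ [(a, b)]) []]
        simp
      · simp only [bfStep, hm, if_neg hab]
        rw [ih A M (U ++ [b]), ih A [] ([] ++ [b])]
        simp

lemma bfWelfare_match {asks : List ℝ} {a : ℝ} {rest : List ℝ} {b : ℝ} (bs : List ℝ)
    (hm : extractMin asks = some (a, rest)) (hab : a ≤ b) :
    bfWelfare asks (b :: bs) = b + bfWelfare rest bs := by
  unfold bfWelfare bfRun
  simp only [List.foldl]
  have h1 : bfStep ⟨asks, [], []⟩ b = ⟨rest, [(a, b)], []⟩ := by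
    simp [bfStep, hm, hab]
  rw [h1, foldl_bfStep_general bs rest [(a, b)] []]
  simp
  ring

lemma bfWelfare_reject {asks : List ℝ} {b : ℝ} (bs : List ℝ)
    (h : bfStep ⟨asks, [], []⟩ b = ⟨asks, [], [b]⟩) :
    bfWelfare asks (b :: bs) = bfWelfare asks bs := by
  unfold bfWelfare bfRun
  simp only [List.foldl]
  rw [h, foldl_bfStep_general bs asks [] [b]]
  simp

lemma exchange {r : Multiset ℝ} {a : ℝ} {S : Multiset ℝ}
    (hS : S ≤ a ::ₘ r) (hmin : ∀ y ∈ r, a ≤ y)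
    (hcard : Multiset.card S ≤ Multiset.card r) :
    ∃ S' : Multiset ℝ, S' ≤ r ∧ Multiset.card S' = Multiset.card S ∧ S.sum ≤ S'.sum := by
  by_cases haS : a ∈ S
  · have ht : S.erase a ≤ r := by
      have := Multiset.erase_le_erase a hS
      simpa using this
    have hce : Multiset.card (S.erase a) = Multiset.card S - 1 := by
      rw [Multiset.card_erase_of_mem haS]; rfl
    have hcards : Multiset.card (S.erase a) < Multiset.card r := by
      have hpos : 0 < Multiset.card S := Multiset.card_pos.mpr (fun h => by simp [h] at haS)
      omega
    have hne : r - S.erase a ≠ 0 := by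
      intro h0
      have := Multiset.card_sub ht
      rw [h0] at this
      simp at this
      omega
    obtain ⟨x, hx⟩ := Multiset.exists_mem_of_ne_zero hne
    refine ⟨x ::ₘ S.erase a, cons_le_of_mem_sub ht hx, ?_, ?_⟩
    · have hpos : 0 < Multiset.card S := Multiset.card_pos.mpr (fun h => by simp [h] at haS)
      simp only [Multiset.card_cons]
      omega
    · have hxr : x ∈ r := Multiset.mem_of_le (tsub_le_self) hx
      have hax : a ≤ x := hmin x hxr
      have : S.sum = a + (S.erase a).sum := by
        conv_lhs => rw [← Multiset.cons_erase haS]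
        simp
      rw [this, Multiset.sum_cons]
      linarith
  · refine ⟨S, ?_, rfl, le_rfl⟩
    rw [Multiset.le_iff_count]
    intro v
    by_cases hva : v = a
    · subst hva; simp [Multiset.count_eq_zero_of_notMem haS]
    · have := Multiset.le_iff_count.mp hS v
      simpa [Multiset.count_cons, hva] using this

lemma greedy : ∀ (bids asks : List ℝ) (S : Multiset ℝ),
    (∀ a ∈ asks, 0 ≤ a) → S ≤ (asks : Multiset ℝ) →
    Multiset.card S + bids.length ≤ asks.length →
    S.sum + bids.sum ≤ bfWelfare asks bids := by
  intro bids
  induction bids with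
  | nil =>
    intro asks S ha hS _
    have : bfWelfare asks [] = asks.sum := by
      unfold bfWelfare bfRun; simp
    rw [this]
    obtain ⟨u, hu⟩ := Multiset.le_iff_exists_add.mp hS
    have h1 : (asks : Multiset ℝ).sum = S.sum + u.sum := by rw [hu]; simp
    have h2 : 0 ≤ u.sum := Multiset.sum_nonneg (fun x hx => by
      apply ha
      have : x ∈ (asks : Multiset ℝ) := by rw [hu]; exact Multiset.mem_add.mpr (Or.inr hx)
      simpa using this)
    have : (asks : Multiset ℝ).sum = asks.sum := by simp
    simp only [List.sum_nil, add_zero]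
    linarith [h1, h2, this]
  | cons b bs ih =>
    intro asks S ha hS hcard
    rcases hm : extractMin asks with _ | ⟨a, rest⟩
    · have : asks = [] := extractMin_eq_none hm
      subst this
      simp at hcard
    · have hperm : asks.Perm (a :: rest) := extractMin_perm hm
      have hlen : asks.length = rest.length + 1 := by
        have := hperm.length_eq; simpa using this
      have hcoe : (asks : Multiset ℝ) = a ::ₘ (rest : Multiset ℝ) := by
        exact_mod_cast Quot.sound hperm
      have hmin : ∀ x ∈ asks, a ≤ x := extractMin_min hm
      have hminr : ∀ y ∈ (rest : Multiset ℝ), a ≤ y := by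
        intro y hy
        apply hmin
        have : y ∈ a ::ₘ (rest : Multiset ℝ) := Multiset.mem_cons_of_mem hy
        rw [← hcoe] at this
        simpa using this
      by_cases hab : a ≤ b
      · -- matched
        rw [bfWelfare_match bs hm hab]
        have hScons : S ≤ a ::ₘ (rest : Multiset ℝ) := hcoe ▸ hS
        have hc : Multiset.card S ≤ Multiset.card (rest : Multiset ℝ) := by
          simp only [Multiset.coe_card]
          simp only [List.length_cons] at hcard
          omega
        obtain ⟨S', hS'le, hS'card, hS'sum⟩ := exchange hScons hminr hc
        have har : ∀ x ∈ rest, 0 ≤ x := by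
          intro x hx
          exact ha x (hperm.mem_iff.mpr (by simp [hx]))
        have := ih rest S' har hS'le (by
          rw [hS'card]
          simp only [List.length_cons] at hcard
          omega)
        simp only [List.sum_cons]
        linarith
      · -- rejected
        have hstep : bfStep ⟨asks, [], []⟩ b = ⟨asks, [], [b]⟩ := by
          simp [bfStep, hm, hab]
        rw [bfWelfare_reject bs hstep]
        have hcardlt : Multiset.card S < asks.length := by
          simp at hcard; omega
        have hne : (asks : Multiset ℝ) - S ≠ 0 := by
          intro h0
          have := Multiset.card_sub hS
          rw [h0] at this
          simp at this
          omega
        obtain ⟨y, hy⟩ := Multiset.exists_mem_of_ne_zero hne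
        have hyasks : y ∈ (asks : Multiset ℝ) := Multiset.mem_of_le (tsub_le_self) hy
        have hay : a ≤ y := hmin y (by simpa using hyasks)
        have hby : b ≤ y := le_trans (le_of_not_ge hab) hay
        have hS'' : y ::ₘ S ≤ (asks : Multiset ℝ) := cons_le_of_mem_sub hS hy
        have := ih asks (y ::ₘ S) ha hS'' (by
          simp only [Multiset.card_cons]
          simp at hcard ⊢
          omega)
        simp only [Multiset.sum_cons] at this
        simp only [List.sum_cons]
        linarith

lemma welfare_le (asks bids : List ℝ) (ha : ∀ a ∈ asks, 0 ≤ a)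
    (hb : ∀ b ∈ bids, 0 ≤ b) (M : Multiset (ℝ × ℝ)) (hM : IsFeasible asks bids M) :
    welfare asks M ≤ ((sortDesc (asks ++ bids)).take asks.length).sum := by
  obtain ⟨hf, hs, _⟩ := hM
  set W : Multiset ℝ := M.map Prod.snd + ((asks : Multiset ℝ) - M.map Prod.fst) with hWdef
  have hWsum : welfare asks M = W.sum := by
    rw [hWdef, Multiset.sum_add]; rfl
  have hcardM : Multiset.card M ≤ asks.length := by
    have := Multiset.card_le_card hf
    simpa using this
  have hcardW : Multiset.card W = asks.length := by
    rw [hWdef]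
    simp only [Multiset.card_add, Multiset.card_map, Multiset.card_sub hf,
      Multiset.coe_card, Multiset.card_map]
    omega
  have hD : ((sortDesc (asks ++ bids) : List ℝ) : Multiset ℝ)
      = ((asks ++ bids : List ℝ) : Multiset ℝ) :=
    Multiset.coe_eq_coe.mpr (sortDesc_perm _)
  have hWle : W ≤ ((sortDesc (asks ++ bids) : List ℝ) : Multiset ℝ) := by
    rw [hD]
    have h1 : ((asks ++ bids : List ℝ) : Multiset ℝ)
        = (bids : Multiset ℝ) + (asks : Multiset ℝ) := by
      rw [← Multiset.coe_add, add_comm]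
    rw [h1, hWdef]
    exact add_le_add hs (tsub_le_self)
  have hnn : ∀ y ∈ sortDesc (asks ++ bids), 0 ≤ y := by
    intro y hy
    have : y ∈ asks ++ bids := (sortDesc_perm _).mem_iff.mp hy
    rcases List.mem_append.mp this with h | h
    · exact ha y h
    · exact hb y h
  have := sum_le_take_sum (sortDesc (asks ++ bids)) (sortDesc_pairwise _) hnn W hWle
  rw [hcardW] at this
  linarith [hWsum ▸ this]

lemma optW_le (asks bids : List ℝ) (ha : ∀ a ∈ asks, 0 ≤ a) (hb : ∀ b ∈ bids, 0 ≤ b) :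
    OptW asks bids ≤ ((sortDesc (asks ++ bids)).take asks.length).sum := by
  apply csSup_le
  · exact ⟨welfare asks 0, 0, ⟨by simp, by simp, by simp⟩, rfl⟩
  · rintro w ⟨M, hM, rfl⟩
    exact welfare_le asks bids ha hb M hM

/-- Competitiveness is preserved by the reduction: if a
one-sided auction selects at most `k` elements (asks `selAsks` and bids
`selBids`) of the combined collection whose total value is at least `1/c`
times the sum of the `k` largest values in that collection (`k` the number of
asks, `c ≥ 1`), then greedily matching the selected bids in order to the
lowest-value unmatched asks yields social welfare at least `W(Opt)/c`. -/
theorem reduction_preserves_competitiveness (c : ℝ) (hc : 1 ≤ c)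
    (asks bids selBids : List ℝ) (selAsks : Multiset ℝ)
    (ha : ∀ a ∈ asks, 0 ≤ a) (hb : ∀ b ∈ bids, 0 ≤ b)
    (hselA : selAsks ≤ (asks : Multiset ℝ))
    (hselB : (selBids : Multiset ℝ) ≤ (bids : Multiset ℝ))
    (hcard : Multiset.card selAsks + selBids.length ≤ asks.length)
    (hsel : ((sortDesc (asks ++ bids)).take asks.length).sum / c ≤
      selAsks.sum + selBids.sum) :
    OptW asks bids / c ≤ bfWelfare asks selBids := by
  have hc0 : (0 : ℝ) < c := lt_of_lt_of_le one_pos hc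
  have h1 := optW_le asks bids ha hb
  have h2 := greedy selBids asks selAsks ha hselA hcard
  calc OptW asks bids / c
      ≤ ((sortDesc (asks ++ bids)).take asks.length).sum / c := by gcongr
    _ ≤ selAsks.sum + selBids.sum := hsel
    _ ≤ bfWelfare asks selBids := h2
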